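/- Let A, B be sets of n binary vectors in {0,1}^d, A = {a₁,…,a_n}, B = {b₁,…,b_n}. Let N_A, N_B be normalized vector gadgets mapping {0,1}^d to permutations of [5d−1] satisfying LCS(N_A(a), N_B(b)) = 2d if ⟨a,b⟩ = 0 and 2d−1 otherwise. For v = 5d−1 and each (i,j) ∈ [n]×[n], let α_{i,j} = Δ_{((i−1)n+(j−1))v}(N_A(a_i)) and β_{i,j} = Δ_{((i−1)n+(j−1))v}(N_B(b_j)). Define f(A) = concatenation over i of (concatenation over j of α_{i,j}) and g(B) = concatenation over i of (concatenation over j of β_{i,j}). Then LCS(f(A), g(B)) = 2d·|S| + (2d−1)(n² − |S|), where S = {(i,j) : ⟨a_i, b_j⟩ = 0}. Consequently, d_U(f(A), g(B)) ≤ 3n²d − 1 if some pair (a_i, b_j) is orthogonal, and d_U(f(A), g(B)) = 3n²d otherwise. -/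

import Mathlib

/-- Length of a longest common subsequence of two strings (lists over ℕ). -/
noncomputable def LCS (x y : List ℕ) : ℕ :=
  sSup {k | ∃ s : List ℕ, s.Sublist x ∧ s.Sublist y ∧ s.length = k}

/-- Ulam distance between permutations, via `d_U(σ,τ) = |σ| − LCS(σ,τ)`. -/
noncomputable def ulamDist (x y : List ℕ) : ℕ := x.length - LCS x y

/-- `π` is a permutation of `[n] = {1,…,n}` viewed as a string. -/
def IsPermOf (n : ℕ) (π : List ℕ) : Prop := π.Perm (List.range' 1 n)

/-- `Δ_k(s)`: add `k` to every symbol of `s`. -/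
def shift (k : ℕ) (s : List ℕ) : List ℕ := s.map (· + k)

lemma lcs_nonempty (x y : List ℕ) :
    {k | ∃ s : List ℕ, s.Sublist x ∧ s.Sublist y ∧ s.length = k}.Nonempty :=
  ⟨0, [], List.nil_sublist _, List.nil_sublist _, rfl⟩

lemma lcs_bdd (x y : List ℕ) :
    BddAbove {k | ∃ s : List ℕ, s.Sublist x ∧ s.Sublist y ∧ s.length = k} := by
  refine ⟨x.length, fun k hk => ?_⟩
  obtain ⟨s, hs, -, rfl⟩ := hk
  exact hs.length_le

lemma exists_lcs (x y : List ℕ) :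
    ∃ s : List ℕ, s.Sublist x ∧ s.Sublist y ∧ s.length = LCS x y :=
  Nat.sSup_mem (lcs_nonempty x y) (lcs_bdd x y)

lemma length_le_lcs {x y s : List ℕ} (h1 : s.Sublist x) (h2 : s.Sublist y) :
    s.length ≤ LCS x y :=
  le_csSup (lcs_bdd x y) ⟨s, h1, h2, rfl⟩

lemma lcs_le_length_left (x y : List ℕ) : LCS x y ≤ x.length := by
  obtain ⟨s, h1, -, hl⟩ := exists_lcs x y
  exact hl ▸ h1.length_le

lemma lcs_nil : LCS [] [] = 0 :=
  Nat.le_antisymm (lcs_le_length_left [] []) (Nat.zero_le _)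

lemma lcs_shift (k : ℕ) (x y : List ℕ) : LCS (shift k x) (shift k y) = LCS x y := by
  apply le_antisymm
  · obtain ⟨s, h1, h2, hl⟩ := exists_lcs (shift k x) (shift k y)
    obtain ⟨t, ht, rfl⟩ := List.sublist_map_iff.mp h1
    obtain ⟨t', ht', he⟩ := List.sublist_map_iff.mp h2
    have hinj : Function.Injective (fun m : ℕ => m + k) := add_left_injective k
    have htt : t = t' := List.map_injective_iff.mpr hinj he
    rw [← hl, List.length_map]
    exact length_le_lcs ht (htt ▸ ht')
  · obtain ⟨s, h1, h2, hl⟩ := exists_lcs x y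
    have := length_le_lcs (h1.map (· + k)) (h2.map (· + k))
    simpa [shift, hl] using this

lemma split_eq {c : ℕ} : ∀ (u₁ u₂ w₁ w₂ : List ℕ),
    u₁ ++ u₂ = w₁ ++ w₂ →
    (∀ a ∈ u₁, a < c) → (∀ a ∈ u₂, c ≤ a) →
    (∀ a ∈ w₁, a < c) → (∀ a ∈ w₂, c ≤ a) → u₁ = w₁ ∧ u₂ = w₂ := by
  intro u₁
  induction u₁ with
  | nil =>
    intro u₂ w₁ w₂ h hu₁ hu₂ hw₁ hw₂
    cases w₁ with
    | nil => exact ⟨rfl, by simpa using h⟩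
    | cons x w₁ =>
      exfalso
      simp only [List.nil_append, List.cons_append] at h
      have h1 : c ≤ x := hu₂ x (h ▸ List.mem_cons_self)
      have h2 : x < c := hw₁ x (List.mem_cons_self)
      omega
  | cons x u₁ ih =>
    intro u₂ w₁ w₂ h hu₁ hu₂ hw₁ hw₂
    cases w₁ with
    | nil =>
      exfalso
      simp only [List.nil_append, List.cons_append] at h
      have h1 : c ≤ x := hw₂ x (by rw [← h]; exact List.mem_cons_self)
      have h2 : x < c := hu₁ x (List.mem_cons_self)
      omega
    | cons y w₁ =>
      simp only [List.cons_append, List.cons.injEq] at h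
      obtain ⟨rfl, h⟩ := h
      obtain ⟨h1, h2⟩ := ih u₂ w₁ w₂ h
        (fun a ha => hu₁ a (List.mem_cons_of_mem _ ha)) hu₂
        (fun a ha => hw₁ a (List.mem_cons_of_mem _ ha)) hw₂
      exact ⟨by rw [h1], h2⟩

lemma lcs_append_sep {c : ℕ} (x₁ x₂ y₁ y₂ : List ℕ)
    (hx₁ : ∀ a ∈ x₁, a < c) (hx₂ : ∀ a ∈ x₂, c ≤ a)
    (hy₁ : ∀ a ∈ y₁, a < c) (hy₂ : ∀ a ∈ y₂, c ≤ a) :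
    LCS (x₁ ++ x₂) (y₁ ++ y₂) = LCS x₁ y₁ + LCS x₂ y₂ := by
  apply le_antisymm
  · obtain ⟨s, hsx, hsy, hlen⟩ := exists_lcs (x₁ ++ x₂) (y₁ ++ y₂)
    obtain ⟨u₁, u₂, rfl, hu₁, hu₂⟩ := List.sublist_append_iff.mp hsx
    obtain ⟨w₁, w₂, heq, hw₁, hw₂⟩ := List.sublist_append_iff.mp hsy
    obtain ⟨e1, e2⟩ := split_eq u₁ u₂ w₁ w₂ heq
      (fun a ha => hx₁ a (hu₁.subset ha)) (fun a ha => hx₂ a (hu₂.subset ha))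
      (fun a ha => hy₁ a (hw₁.subset ha)) (fun a ha => hy₂ a (hw₂.subset ha))
    subst e1; subst e2
    rw [← hlen, List.length_append]
    exact add_le_add (length_le_lcs hu₁ hw₁) (length_le_lcs hu₂ hw₂)
  · obtain ⟨s₁, h1x, h1y, e1⟩ := exists_lcs x₁ y₁
    obtain ⟨s₂, h2x, h2y, e2⟩ := exists_lcs x₂ y₂
    have := length_le_lcs (h1x.append h2x) (h1y.append h2y)
    simpa [e1, e2] using this

lemma lcs_flatten_sum (F G : ℕ → List ℕ) (c : ℕ → ℕ) (hc : Monotone c)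
    (hF : ∀ k, ∀ a ∈ F k, c k ≤ a ∧ a < c (k + 1))
    (hG : ∀ k, ∀ a ∈ G k, c k ≤ a ∧ a < c (k + 1)) :
    ∀ m s : ℕ, LCS (((List.range' s m).map F).flatten) (((List.range' s m).map G).flatten)
      = ((List.range' s m).map fun k => LCS (F k) (G k)).sum := by
  intro m
  induction m with
  | zero => intro s; simp [lcs_nil]
  | succ m ih =>
    intro s
    rw [List.range'_succ]
    simp only [List.map_cons, List.flatten_cons, List.sum_cons]
    rw [lcs_append_sep (c := c (s + 1)) _ _ _ _
      (fun a ha => (hF s a ha).2)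
      (by
        intro a ha
        simp only [List.mem_flatten, List.mem_map] at ha
        obtain ⟨l, ⟨k, hk, rfl⟩, hal⟩ := ha
        exact le_trans (hc (List.mem_range'_1.mp hk).1) (hF k a hal).1)
      (fun a ha => (hG s a ha).2)
      (by
        intro a ha
        simp only [List.mem_flatten, List.mem_map] at ha
        obtain ⟨l, ⟨k, hk, rfl⟩, hal⟩ := ha
        exact le_trans (hc (List.mem_range'_1.mp hk).1) (hG k a hal).1)]
    rw [ih]

lemma lcs_flatten_sum_range (n : ℕ) (F G : ℕ → List ℕ) (c : ℕ → ℕ) (hc : Monotone c)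
    (hF : ∀ k, ∀ a ∈ F k, c k ≤ a ∧ a < c (k + 1))
    (hG : ∀ k, ∀ a ∈ G k, c k ≤ a ∧ a < c (k + 1)) :
    LCS (((List.range n).map F).flatten) (((List.range n).map G).flatten)
      = ((List.range n).map fun k => LCS (F k) (G k)).sum := by
  rw [List.range_eq_range']
  exact lcs_flatten_sum F G c hc hF hG n 0

lemma list_sum_range (f : ℕ → ℕ) : ∀ n : ℕ,
    ((List.range n).map f).sum = ∑ i ∈ Finset.range n, f i := by
  intro n
  induction n with
  | zero => simp
  | succ n ih => simp [List.range_succ, Finset.sum_range_succ, ih]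

lemma map_finRange_eq (n : ℕ) (f : ℕ → List ℕ) :
    (List.finRange n).map (fun i : Fin n => f i.val) = (List.range n).map f := by
  apply List.ext_getElem <;> simp

lemma double_flatten_eq (n : ℕ) (h : ℕ → ℕ → List ℕ) :
    ((List.finRange n).map fun i =>
        ((List.finRange n).map fun j => h i.val j.val).flatten).flatten
      = ((List.range n).map fun i => ((List.range n).map fun j => h i j).flatten).flatten := by
  rw [← map_finRange_eq n (fun i => ((List.range n).map (h i)).flatten)]
  congr 1
  apply List.map_congr_left
  intro i _
  rw [← map_finRange_eq n (h i.val)]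

theorem or_gadget (n d : ℕ) (NA NB : (Fin d → Fin 2) → List ℕ)
    (hNA : ∀ x, IsPermOf (5 * d - 1) (NA x)) (hNB : ∀ x, IsPermOf (5 * d - 1) (NB x))
    (hLCS : ∀ x y, LCS (NA x) (NB y) =
      if (∑ i, (x i : ℕ) * (y i : ℕ)) = 0 then 2 * d else 2 * d - 1)
    (a b : Fin n → Fin d → Fin 2)
    (fA gB : List ℕ)
    (hfA : fA = ((List.finRange n).map fun i => ((List.finRange n).map fun j =>
        shift ((i.val * n + j.val) * (5 * d - 1)) (NA (a i))).flatten).flatten)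
    (hgB : gB = ((List.finRange n).map fun i => ((List.finRange n).map fun j =>
        shift ((i.val * n + j.val) * (5 * d - 1)) (NB (b j))).flatten).flatten)
    (S : Finset (Fin n × Fin n))
    (hS : S = Finset.univ.filter fun p => (∑ i, (a p.1 i : ℕ) * (b p.2 i : ℕ)) = 0) :
    LCS fA gB = 2 * d * S.card + (2 * d - 1) * (n ^ 2 - S.card) ∧
    (S.Nonempty → ulamDist fA gB ≤ 3 * n ^ 2 * d - 1) ∧
    (S = ∅ → ulamDist fA gB = 3 * n ^ 2 * d) := by
  classical
  set v : ℕ := 5 * d - 1 with hv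
  set a' : ℕ → Fin d → Fin 2 := fun i => if h : i < n then a ⟨i, h⟩ else fun _ => 0 with ha'def
  set b' : ℕ → Fin d → Fin 2 := fun j => if h : j < n then b ⟨j, h⟩ else fun _ => 0 with hb'def
  have ha' : ∀ i : Fin n, a' i.val = a i := fun i => by simp [ha'def]
  have hb' : ∀ j : Fin n, b' j.val = b j := fun j => by simp [hb'def]
  -- lengths and membership bounds for the gadgets
  have hlenNA : ∀ x, (NA x).length = v := fun x => by
    simpa using (hNA x).length_eq
  have hlenNB : ∀ x, (NB x).length = v := fun x => by
    simpa using (hNB x).length_eq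
  have hmemNA : ∀ x, ∀ y ∈ NA x, 1 ≤ y ∧ y ≤ v := by
    intro x y hy
    have := ((hNA x).mem_iff).mp hy
    have := List.mem_range'_1.mp this
    omega
  have hmemNB : ∀ x, ∀ y ∈ NB x, 1 ≤ y ∧ y ≤ v := by
    intro x y hy
    have := ((hNB x).mem_iff).mp hy
    have := List.mem_range'_1.mp this
    omega
  -- rewrite fA, gB over `List.range`
  have hfA' : fA = ((List.range n).map fun i =>
      ((List.range n).map fun j => shift ((i * n + j) * v) (NA (a' i))).flatten).flatten := by
    rw [hfA, ← double_flatten_eq n (fun i j => shift ((i * n + j) * v) (NA (a' i)))]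
    simp only [ha']
  have hgB' : gB = ((List.range n).map fun i =>
      ((List.range n).map fun j => shift ((i * n + j) * v) (NB (b' j))).flatten).flatten := by
    rw [hgB, ← double_flatten_eq n (fun i j => shift ((i * n + j) * v) (NB (b' j)))]
    simp only [hb']
  -- bounds for inner blocks
  have hboundA : ∀ i j : ℕ, ∀ x ∈ shift ((i * n + j) * v) (NA (a' i)),
      (i * n + j) * v + 1 ≤ x ∧ x < (i * n + (j + 1)) * v + 1 := by
    intro i j x hx
    simp only [shift, List.mem_map] at hx
    obtain ⟨y, hy, rfl⟩ := hx
    obtain ⟨hy1, hy2⟩ := hmemNA _ y hy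
    have h2 : (i * n + (j + 1)) * v = (i * n + j) * v + v := by ring
    omega
  have hboundB : ∀ i j : ℕ, ∀ x ∈ shift ((i * n + j) * v) (NB (b' j)),
      (i * n + j) * v + 1 ≤ x ∧ x < (i * n + (j + 1)) * v + 1 := by
    intro i j x hx
    simp only [shift, List.mem_map] at hx
    obtain ⟨y, hy, rfl⟩ := hx
    obtain ⟨hy1, hy2⟩ := hmemNB _ y hy
    have h2 : (i * n + (j + 1)) * v = (i * n + j) * v + v := by ring
    omega
  -- inner sum: for fixed i
  have hinner : ∀ i : ℕ,
      LCS (((List.range n).map fun j => shift ((i * n + j) * v) (NA (a' i))).flatten)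
          (((List.range n).map fun j => shift ((i * n + j) * v) (NB (b' j))).flatten)
        = ((List.range n).map fun j => LCS (NA (a' i)) (NB (b' j))).sum := by
    intro i
    have hmono : Monotone (fun j : ℕ => (i * n + j) * v + 1) := by
      intro x y hxy
      show (i * n + x) * v + 1 ≤ (i * n + y) * v + 1
      have := Nat.mul_le_mul_right v (Nat.add_le_add_left hxy (i * n))
      omega
    rw [lcs_flatten_sum_range n
      (fun j => shift ((i * n + j) * v) (NA (a' i)))
      (fun j => shift ((i * n + j) * v) (NB (b' j)))
      (fun j => (i * n + j) * v + 1) hmono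
      (fun j => hboundA i j) (fun j => hboundB i j)]
    simp only [lcs_shift]
  -- outer bounds
  have hFbound : ∀ i : ℕ, ∀ x ∈
      ((List.range n).map fun j => shift ((i * n + j) * v) (NA (a' i))).flatten,
      i * (n * v) + 1 ≤ x ∧ x < (i + 1) * (n * v) + 1 := by
    intro i x hx
    simp only [List.mem_flatten, List.mem_map] at hx
    obtain ⟨l, ⟨j, hj, rfl⟩, hxl⟩ := hx
    have hjn : j < n := List.mem_range.mp hj
    obtain ⟨h1, h2⟩ := hboundA i j x hxl
    have e1 : i * (n * v) ≤ (i * n + j) * v := by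
      rw [← mul_assoc]
      exact Nat.mul_le_mul_right v (Nat.le_add_right _ j)
    have e2 : (i * n + (j + 1)) * v ≤ (i + 1) * (n * v) := by
      rw [← mul_assoc]
      exact Nat.mul_le_mul_right v (by nlinarith)
    omega
  have hGbound : ∀ i : ℕ, ∀ x ∈
      ((List.range n).map fun j => shift ((i * n + j) * v) (NB (b' j))).flatten,
      i * (n * v) + 1 ≤ x ∧ x < (i + 1) * (n * v) + 1 := by
    intro i x hx
    simp only [List.mem_flatten, List.mem_map] at hx
    obtain ⟨l, ⟨j, hj, rfl⟩, hxl⟩ := hx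
    have hjn : j < n := List.mem_range.mp hj
    obtain ⟨h1, h2⟩ := hboundB i j x hxl
    have e1 : i * (n * v) ≤ (i * n + j) * v := by
      rw [← mul_assoc]
      exact Nat.mul_le_mul_right v (Nat.le_add_right _ j)
    have e2 : (i * n + (j + 1)) * v ≤ (i + 1) * (n * v) := by
      rw [← mul_assoc]
      exact Nat.mul_le_mul_right v (by nlinarith)
    omega
  have houtmono : Monotone (fun i : ℕ => i * (n * v) + 1) := by
    intro x y hxy
    show x * (n * v) + 1 ≤ y * (n * v) + 1
    have := Nat.mul_le_mul_right (n * v) hxy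
    omega
  -- main LCS computation
  have hmain0 : LCS fA gB =
      ((List.range n).map fun i => ((List.range n).map fun j =>
        LCS (NA (a' i)) (NB (b' j))).sum).sum := by
    rw [hfA', hgB']
    rw [lcs_flatten_sum_range n
      (fun i => ((List.range n).map fun j => shift ((i * n + j) * v) (NA (a' i))).flatten)
      (fun i => ((List.range n).map fun j => shift ((i * n + j) * v) (NB (b' j))).flatten)
      (fun i => i * (n * v) + 1) houtmono hFbound hGbound]
    apply congrArg
    apply List.map_congr_left
    intro i _
    exact hinner i
  have hmain1 : LCS fA gB = ∑ i : Fin n, ∑ j : Fin n, LCS (NA (a i)) (NB (b j)) := by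
    rw [hmain0, list_sum_range]
    have : ∀ i : ℕ, ((List.range n).map fun j => LCS (NA (a' i)) (NB (b' j))).sum
        = ∑ j ∈ Finset.range n, LCS (NA (a' i)) (NB (b' j)) := fun i => list_sum_range _ n
    simp only [this]
    rw [← Fin.sum_univ_eq_sum_range (fun i => ∑ j ∈ Finset.range n, LCS (NA (a' i)) (NB (b' j))) n]
    apply Finset.sum_congr rfl
    intro i _
    rw [← Fin.sum_univ_eq_sum_range (fun j => LCS (NA (a' i.val)) (NB (b' j))) n]
    simp only [ha', hb']
  -- count via S
  have hcardU : (Finset.univ : Finset (Fin n × Fin n)).card = n ^ 2 := by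
    simp [sq]
  have hSle : S.card ≤ n ^ 2 := by
    rw [← hcardU]
    exact Finset.card_le_card (Finset.subset_univ S)
  have hmain : LCS fA gB = 2 * d * S.card + (2 * d - 1) * (n ^ 2 - S.card) := by
    rw [hmain1]
    simp only [hLCS]
    rw [← Fintype.sum_prod_type
      (fun p : Fin n × Fin n => if (∑ i, (a p.1 i : ℕ) * (b p.2 i : ℕ)) = 0
        then 2 * d else 2 * d - 1)]
    rw [Finset.sum_ite]
    have hfilt : Finset.filter
        (fun p : Fin n × Fin n => (∑ i, (a p.1 i : ℕ) * (b p.2 i : ℕ)) = 0) Finset.univ = S := by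
      rw [hS]
    have hfilt2 : (Finset.filter
        (fun p : Fin n × Fin n => ¬ (∑ i, (a p.1 i : ℕ) * (b p.2 i : ℕ)) = 0)
          Finset.univ).card = n ^ 2 - S.card := by
      have := Finset.card_filter_add_card_filter_not
        (s := (Finset.univ : Finset (Fin n × Fin n)))
        (p := fun p : Fin n × Fin n => (∑ i, (a p.1 i : ℕ) * (b p.2 i : ℕ)) = 0)
      rw [hfilt, hcardU] at this
      omega
    rw [hfilt]
    rw [Finset.sum_const, Finset.sum_const, hfilt2]
    simp [mul_comm]
  have hlen : fA.length = n ^ 2 * v := by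
    rw [hfA', List.length_flatten, List.map_map]
    have outer : ∀ i : ℕ, (List.length ∘ fun i =>
        ((List.range n).map fun j => shift ((i * n + j) * v) (NA (a' i))).flatten) i = n * v := by
      intro i
      simp only [Function.comp_apply, List.length_flatten, List.map_map]
      have hconst : (List.length ∘ fun j => shift ((i * n + j) * v) (NA (a' i)))
          = fun _ : ℕ => v := by
        funext j; simp [shift, hlenNA]
      rw [hconst, list_sum_range]
      simp
    rw [List.map_congr_left (fun i _ => outer i), list_sum_range]
    simp only [Finset.sum_const, Finset.card_range, smul_eq_mul]
    ring
  refine ⟨hmain, ?_, ?_⟩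
  · -- S nonempty
    intro hSne
    have hm1 : 1 ≤ S.card := Finset.card_pos.mpr hSne
    rcases Nat.eq_zero_or_pos d with hd0 | hdpos
    · have hv0 : v = 0 := by rw [hv, hd0]
      simp [ulamDist, hlen, hv0]
    · obtain ⟨d', hd'⟩ : ∃ d', d = d' + 1 := ⟨d - 1, by omega⟩
      obtain ⟨q, hq⟩ : ∃ q, n ^ 2 = S.card + q := ⟨n ^ 2 - S.card, by omega⟩
      have hv' : v = 5 * d' + 4 := by rw [hv]; omega
      have hL : LCS fA gB = (2 * d' + 1) * (S.card + q) + S.card := by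
        rw [hmain, hq]
        have h1 : S.card + q - S.card = q := by omega
        have e2 : 2 * d - 1 = 2 * d' + 1 := by omega
        rw [h1, e2, hd']; ring
      have hlen2 : fA.length
          = 3 * (S.card + q) * (d' + 1) + (2 * d' + 1) * (S.card + q) := by
        rw [hlen, hq, hv']; ring
      rw [ulamDist, hlen2, hL]
      have htar : 3 * n ^ 2 * d = 3 * (S.card + q) * (d' + 1) := by rw [hq, hd']
      rw [htar]
      generalize 3 * (S.card + q) * (d' + 1) = A
      generalize (2 * d' + 1) * (S.card + q) = X
      omega
  · -- S empty
    intro hSe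
    subst hSe
    simp only [Finset.card_empty, Nat.mul_zero, Nat.sub_zero, Nat.add_zero] at hmain
    rcases Nat.eq_zero_or_pos d with hd0 | hdpos
    · have hv0 : v = 0 := by rw [hv, hd0]
      simp [ulamDist, hlen, hv0, hd0]
    · obtain ⟨d', hd'⟩ : ∃ d', d = d' + 1 := ⟨d - 1, by omega⟩
      have hv' : v = 5 * d' + 4 := by rw [hv]; omega
      have e2 : 2 * d - 1 = 2 * d' + 1 := by omega
      rw [ulamDist, hlen, hmain, hv', e2, hd']
      have hiden : n ^ 2 * (5 * d' + 4) = 3 * n ^ 2 * (d' + 1) + (2 * d' + 1) * n ^ 2 := by ring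
      rw [hiden]
      generalize 3 * n ^ 2 * (d' + 1) = A
      generalize (2 * d' + 1) * n ^ 2 = X
      omega
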